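/- Let 0 ≤ ε < 1/2, let q ≥ 1, and let g : (ℤ/qℤ)* → ℂ be a function with g(1) = 1 and |g(ab) − g(a)g(b)| ≤ ε for all a, b coprime to q. Then there exists a Dirichlet character χ (mod q) such that |χ(a) − g(a)| ≤ ε/(1 − 2ε) for all a with (a,q) = 1. -/

import Mathlib

open Complex ComplexConjugate Finset

namespace Stmt19Aux

variable {q : ℕ}

/-- The (unnormalized) Fourier coefficient of `g` at `χ`. -/
noncomputable def T [NeZero q] (g : (ZMod q)ˣ → ℂ) (χ : DirichletCharacter ℂ q) : ℂ :=
  ∑ a : (ZMod q)ˣ, g a * conj (χ (a : ZMod q))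

lemma abs_char [NeZero q] (χ : DirichletCharacter ℂ q) (a : (ZMod q)ˣ) :
    ‖χ (a : ZMod q)‖ = 1 := by
  have h : (χ (a : ZMod q)) ^ Fintype.card (ZMod q)ˣ = 1 := by
    rw [← map_pow, ← Units.val_pow_eq_pow_val, pow_card_eq_one, Units.val_one, map_one]
  have h2 : ‖χ (a : ZMod q)‖ ^ Fintype.card (ZMod q)ˣ = 1 := by
    rw [← norm_pow, h, norm_one]
  have hN : Fintype.card (ZMod q)ˣ ≠ 0 := Fintype.card_ne_zero
  have h0 : 0 ≤ ‖χ (a : ZMod q)‖ := norm_nonneg _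
  rcases lt_trichotomy (‖χ (a : ZMod q)‖) 1 with hlt | heq | hgt
  · exfalso
    have := pow_lt_one₀ h0 hlt hN
    rw [h2] at this; exact lt_irrefl 1 this
  · exact heq
  · exfalso
    have := one_lt_pow₀ hgt hN
    rw [h2] at this; exact lt_irrefl 1 this

lemma conj_char [NeZero q] (χ : DirichletCharacter ℂ q) (a : (ZMod q)ˣ) :
    conj (χ (a : ZMod q)) = χ ((a⁻¹ : (ZMod q)ˣ) : ZMod q) := by
  have h1 : χ (a : ZMod q) * χ ((a⁻¹ : (ZMod q)ˣ) : ZMod q) = 1 := by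
    rw [← map_mul, ← Units.val_mul, mul_inv_cancel, Units.val_one, map_one]
  rw [← Complex.inv_eq_conj (abs_char χ a)]
  exact (eq_inv_of_mul_eq_one_right h1).symm


variable [NeZero q] [HasEnoughRootsOfUnity ℂ (Monoid.exponent (ZMod q)ˣ)]

lemma card_chars : Fintype.card (DirichletCharacter ℂ q) = Fintype.card (ZMod q)ˣ := by
  have h := DirichletCharacter.card_eq_totient_of_hasEnoughRootsOfUnity ℂ q
  rw [Nat.card_eq_fintype_card] at h
  rw [h, ZMod.card_units_eq_totient]

lemma sum_chars (c : (ZMod q)ˣ) :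
    ∑ χ : DirichletCharacter ℂ q, χ (c : ZMod q) =
      if c = 1 then (Fintype.card (ZMod q)ˣ : ℂ) else 0 := by
  rw [DirichletCharacter.sum_characters_eq]
  by_cases h : c = 1
  · simp [h, ZMod.card_units_eq_totient]
  · have h' : (c : ZMod q) ≠ 1 := fun hh => h (Units.val_eq_one.mp hh)
    simp [h, h']

lemma sum_conj_mul (a b : (ZMod q)ˣ) :
    ∑ χ : DirichletCharacter ℂ q, conj (χ (a : ZMod q)) * χ (b : ZMod q) =
      if a = b then (Fintype.card (ZMod q)ˣ : ℂ) else 0 := by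
  have h : ∀ χ : DirichletCharacter ℂ q,
      conj (χ (a : ZMod q)) * χ (b : ZMod q) = χ (((a⁻¹ * b : (ZMod q)ˣ)) : ZMod q) := by
    intro χ
    rw [conj_char, ← map_mul, Units.val_mul]
  simp_rw [h, sum_chars]
  congr 1
  simp [inv_mul_eq_one, eq_comm]

lemma parseval (h : (ZMod q)ˣ → ℂ) :
    ∑ χ : DirichletCharacter ℂ q, Complex.normSq (T h χ) =
      (Fintype.card (ZMod q)ˣ : ℝ) * ∑ a : (ZMod q)ˣ, Complex.normSq (h a) := by
  have key : ((∑ χ : DirichletCharacter ℂ q, Complex.normSq (T h χ) : ℝ) : ℂ) =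
      (((Fintype.card (ZMod q)ˣ : ℝ) * ∑ a : (ZMod q)ˣ, Complex.normSq (h a) : ℝ) : ℂ) := by
    push_cast
    calc ∑ χ : DirichletCharacter ℂ q, (Complex.normSq (T h χ) : ℂ)
        = ∑ χ : DirichletCharacter ℂ q, T h χ * conj (T h χ) := by
          simp_rw [Complex.mul_conj]
      _ = ∑ χ : DirichletCharacter ℂ q, ∑ a : (ZMod q)ˣ, ∑ b : (ZMod q)ˣ,
            (h a * conj (h b)) * (conj (χ (a : ZMod q)) * χ (b : ZMod q)) := by
          refine Finset.sum_congr rfl fun χ _ => ?_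
          rw [T, map_sum, Finset.sum_mul_sum]
          refine Finset.sum_congr rfl fun a _ => Finset.sum_congr rfl fun b _ => ?_
          rw [map_mul, Complex.conj_conj]
          ring
      _ = ∑ a : (ZMod q)ˣ, ∑ b : (ZMod q)ˣ,
            (h a * conj (h b)) * ∑ χ : DirichletCharacter ℂ q,
              (conj (χ (a : ZMod q)) * χ (b : ZMod q)) := by
          rw [Finset.sum_comm]
          refine Finset.sum_congr rfl fun a _ => ?_
          rw [Finset.sum_comm]
          refine Finset.sum_congr rfl fun b _ => ?_
          rw [← Finset.mul_sum]
      _ = ∑ a : (ZMod q)ˣ, (h a * conj (h a)) * (Fintype.card (ZMod q)ˣ : ℂ) := by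
          refine Finset.sum_congr rfl fun a _ => ?_
          simp_rw [sum_conj_mul, mul_ite, mul_zero]
          rw [Finset.sum_ite_eq]
          simp
      _ = (Fintype.card (ZMod q)ˣ : ℂ) * ∑ a : (ZMod q)ˣ, (Complex.normSq (h a) : ℂ) := by
          simp_rw [Complex.mul_conj]
          rw [← Finset.sum_mul, mul_comm]
  exact_mod_cast key

omit [HasEnoughRootsOfUnity ℂ (Monoid.exponent (ZMod q)ˣ)] in
lemma T_shift (g : (ZMod q)ˣ → ℂ) (χ : DirichletCharacter ℂ q) (b : (ZMod q)ˣ) :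
    ∑ a : (ZMod q)ˣ, g (b * a) * conj (χ (a : ZMod q)) = χ (b : ZMod q) * T g χ := by
  have := Fintype.sum_equiv (Equiv.mulLeft b)
    (fun a : (ZMod q)ˣ => g (b * a) * conj (χ (a : ZMod q)))
    (fun a : (ZMod q)ˣ => χ (b : ZMod q) * (g a * conj (χ (a : ZMod q)))) ?_
  · rw [this, ← Finset.mul_sum, T]
  · intro a
    simp only [Equiv.coe_mulLeft]
    rw [Units.val_mul, map_mul, map_mul]
    have h1 : χ (b : ZMod q) * conj (χ (b : ZMod q)) = 1 := by
      rw [Complex.mul_conj, Complex.normSq_eq_norm_sq, abs_char]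
      norm_num
    linear_combination (-(g (b * a) * conj (χ (a : ZMod q)))) * h1

end Stmt19Aux


open Stmt19Aux in
set_option maxHeartbeats 1000000 in
theorem stmt_19 :
    ∀ (ε : ℝ), 0 ≤ ε → ε < 1 / 2 →
    ∀ (q : ℕ), 1 ≤ q →
    ∀ (g : (ZMod q)ˣ → ℂ), g 1 = 1 →
    (∀ a b : (ZMod q)ˣ, ‖g (a * b) - g a * g b‖ ≤ ε) →
    ∃ χ : DirichletCharacter ℂ q,
      ∀ a : (ZMod q)ˣ, ‖χ (a : ZMod q) - g a‖ ≤ ε / (1 - 2 * ε) := by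
  intro ε hε0 hε2 q hq g hg1 hgmul
  haveI : NeZero q := ⟨by omega⟩
  haveI : NeZero ((Monoid.exponent (ZMod q)ˣ : ℕ) : ℂ) :=
    ⟨Nat.cast_ne_zero.mpr Monoid.exponent_ne_zero_of_finite⟩
  set N : ℕ := Fintype.card (ZMod q)ˣ with hNdef
  have hNpos : 0 < N := Fintype.card_pos
  have hNR : (0:ℝ) < (N:ℝ) := by exact_mod_cast hNpos
  -- pointwise lower bound on |g|
  have hlow : ∀ b : (ZMod q)ˣ, 1 - ε ≤ ‖g b‖ := by
    obtain ⟨a₀, -, hmax⟩ := Finset.exists_max_image Finset.univ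
      (fun a : (ZMod q)ˣ => ‖g a‖) ⟨1, Finset.mem_univ 1⟩
    have hM1 : 1 ≤ ‖g a₀‖ := by
      have h := hmax 1 (Finset.mem_univ 1)
      rwa [hg1, norm_one] at h
    intro b
    have h1 := hgmul (a₀ * b⁻¹) b
    have e1 : a₀ * b⁻¹ * b = a₀ := by group
    rw [e1] at h1
    have h3 : ‖g a₀‖ - ‖g (a₀ * b⁻¹) * g b‖
        ≤ ‖g a₀ - g (a₀ * b⁻¹) * g b‖ := by
      simpa using norm_sub_norm_le (g a₀) (g (a₀ * b⁻¹) * g b)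
    rw [norm_mul] at h3
    have h4 := hmax (a₀ * b⁻¹) (Finset.mem_univ _)
    have hb0 : (0:ℝ) ≤ ‖g b‖ := norm_nonneg _
    nlinarith [h3.trans h1, mul_le_mul_of_nonneg_right h4 hb0]
  set Sg : ℝ := ∑ b : (ZMod q)ˣ, Complex.normSq (g b) with hSgdef
  have hSg : (N:ℝ) * (1-ε)^2 ≤ Sg := by
    rw [hSgdef]
    calc (N:ℝ) * (1-ε)^2 = ∑ _b : (ZMod q)ˣ, (1-ε)^2 := by
          rw [Finset.sum_const, Finset.card_univ, nsmul_eq_mul]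
      _ ≤ ∑ b : (ZMod q)ˣ, Complex.normSq (g b) := by
          refine Finset.sum_le_sum fun b _ => ?_
          rw [Complex.normSq_eq_norm_sq]
          nlinarith [hlow b]
  have hPg : ∑ χ : DirichletCharacter ℂ q, Complex.normSq (T g χ) = (N:ℝ) * Sg :=
    parseval g
  -- master bound for each b
  have hmaster : ∀ b : (ZMod q)ˣ,
      ∑ χ : DirichletCharacter ℂ q,
        Complex.normSq (T g χ) * Complex.normSq (χ (b : ZMod q) - g b)
        ≤ (N:ℝ)^2 * ε^2 := by
    intro b
    have hfact : ∀ χ : DirichletCharacter ℂ q,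
        T (fun a => g (b * a) - g b * g a) χ
          = (χ (b : ZMod q) - g b) * T g χ := by
      intro χ
      have h1 : ∑ a : (ZMod q)ˣ, g (b * a) * conj (χ (a : ZMod q))
          = χ (b : ZMod q) * T g χ := T_shift g χ b
      have h2 : ∑ a : (ZMod q)ˣ, (g b * g a) * conj (χ (a : ZMod q)) = g b * T g χ := by
        simp_rw [mul_assoc]
        rw [← Finset.mul_sum]
        rfl
      calc T (fun a => g (b * a) - g b * g a) χ
          = ∑ a : (ZMod q)ˣ, (g (b * a) * conj (χ (a : ZMod q))
              - (g b * g a) * conj (χ (a : ZMod q))) := by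
            rw [T]
            refine Finset.sum_congr rfl fun a _ => ?_
            ring
        _ = χ (b : ZMod q) * T g χ - g b * T g χ := by
            rw [Finset.sum_sub_distrib, h1, h2]
        _ = (χ (b : ZMod q) - g b) * T g χ := by ring
    have hpar := parseval (fun a => g (b * a) - g b * g a)
    simp_rw [hfact, Complex.normSq_mul] at hpar
    have hrhs : (N:ℝ) * ∑ a : (ZMod q)ˣ, Complex.normSq (g (b * a) - g b * g a)
        ≤ (N:ℝ)^2 * ε^2 := by
      have hin : ∑ a : (ZMod q)ˣ, Complex.normSq (g (b * a) - g b * g a)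
          ≤ (N:ℝ) * ε^2 := by
        calc ∑ a : (ZMod q)ˣ, Complex.normSq (g (b * a) - g b * g a)
            ≤ ∑ _a : (ZMod q)ˣ, ε^2 := by
              refine Finset.sum_le_sum fun a _ => ?_
              rw [Complex.normSq_eq_norm_sq]
              nlinarith [hgmul b a, norm_nonneg (g (b*a) - g b * g a)]
          _ = (N:ℝ) * ε^2 := by rw [Finset.sum_const, Finset.card_univ, nsmul_eq_mul]
      nlinarith [hin, hNR]
    calc ∑ χ : DirichletCharacter ℂ q,
          Complex.normSq (T g χ) * Complex.normSq (χ (b : ZMod q) - g b)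
        = ∑ χ : DirichletCharacter ℂ q,
          Complex.normSq (χ (b : ZMod q) - g b) * Complex.normSq (T g χ) := by
          refine Finset.sum_congr rfl fun χ _ => ?_
          ring
      _ ≤ (N:ℝ)^2 * ε^2 := le_of_le_of_eq (le_of_eq hpar) rfl |>.trans hrhs |> id
  -- second moment of distance to χ
  have hW : ∀ χ : DirichletCharacter ℂ q,
      ∑ b : (ZMod q)ˣ, Complex.normSq (χ (b : ZMod q) - g b)
        = (N:ℝ) + Sg - 2 * (T g χ).re := by
    intro χ
    have hterm : ∀ b : (ZMod q)ˣ, Complex.normSq (χ (b : ZMod q) - g b)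
        = 1 + Complex.normSq (g b) - 2 * (χ (b : ZMod q) * conj (g b)).re := by
      intro b
      rw [Complex.normSq_sub]
      have h1 : Complex.normSq (χ (b : ZMod q)) = 1 := by
        rw [Complex.normSq_eq_norm_sq, abs_char χ b]
        norm_num
      rw [h1]
    have hconj : ∑ b : (ZMod q)ˣ, χ (b : ZMod q) * conj (g b) = conj (T g χ) := by
      rw [T, map_sum]
      refine Finset.sum_congr rfl fun b _ => ?_
      rw [map_mul, Complex.conj_conj]
      ring
    simp_rw [hterm]
    rw [Finset.sum_sub_distrib, Finset.sum_add_distrib, Finset.sum_const, Finset.card_univ,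
      nsmul_eq_mul, mul_one, ← Finset.mul_sum, ← Complex.re_sum, hconj, Complex.conj_re]
  -- existence of a large Fourier coefficient
  have hex : ∃ χ : DirichletCharacter ℂ q,
      (1 - 2*ε) * (N:ℝ) ≤ ‖T g χ‖ := by
    by_contra hc
    push_neg at hc
    have hTsum : ∑ χ : DirichletCharacter ℂ q, T g χ = (N:ℂ) := by
      calc ∑ χ : DirichletCharacter ℂ q, T g χ
          = ∑ χ : DirichletCharacter ℂ q, ∑ a : (ZMod q)ˣ,
              g a * conj (χ (a : ZMod q)) := rfl
        _ = ∑ a : (ZMod q)ˣ, ∑ χ : DirichletCharacter ℂ q,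
              g a * conj (χ (a : ZMod q)) := Finset.sum_comm
        _ = ∑ a : (ZMod q)ˣ, g a * conj (∑ χ : DirichletCharacter ℂ q, χ (a : ZMod q)) := by
            refine Finset.sum_congr rfl fun a _ => ?_
            rw [map_sum, Finset.mul_sum]
        _ = ∑ a : (ZMod q)ˣ, (if a = 1 then g a * (N:ℂ) else 0) := by
            refine Finset.sum_congr rfl fun a _ => ?_
            rw [sum_chars]
            by_cases h : a = 1
            · rw [if_pos h, if_pos h, map_natCast]
            · rw [if_neg h, if_neg h, map_zero, mul_zero]
        _ = g 1 * (N:ℂ) := by rw [Finset.sum_ite_eq' Finset.univ 1]; simp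
        _ = (N:ℂ) := by rw [hg1, one_mul]
    have hne : ∃ χ₀ : DirichletCharacter ℂ q, T g χ₀ ≠ 0 := by
      by_contra hall
      push_neg at hall
      rw [Finset.sum_eq_zero (fun χ _ => hall χ)] at hTsum
      have : ((N:ℂ)) ≠ 0 := by exact_mod_cast hNpos.ne'
      exact this hTsum.symm
    obtain ⟨χ₀, hχ₀⟩ := hne
    set c₀ : ℝ := Sg - (N:ℝ) + 4*ε*(N:ℝ) with hc₀def
    have hc₀pos : (N:ℝ)*(ε^2 + 2*ε) ≤ c₀ := by nlinarith [hSg]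
    have hWlt : ∀ χ : DirichletCharacter ℂ q, c₀ < (N:ℝ) + Sg - 2 * (T g χ).re := by
      intro χ
      have h1 : (T g χ).re ≤ ‖T g χ‖ := Complex.re_le_norm _
      have h2 := hc χ
      nlinarith [h1, h2]
    have hsum1 : ∑ χ : DirichletCharacter ℂ q, Complex.normSq (T g χ) * c₀
        < ∑ χ : DirichletCharacter ℂ q,
            Complex.normSq (T g χ) * ((N:ℝ) + Sg - 2*(T g χ).re) := by
      refine Finset.sum_lt_sum (fun χ _ => ?_) ⟨χ₀, Finset.mem_univ χ₀, ?_⟩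
      · exact mul_le_mul_of_nonneg_left (hWlt χ).le (Complex.normSq_nonneg _)
      · exact mul_lt_mul_of_pos_left (hWlt χ₀) (Complex.normSq_pos.mpr hχ₀)
    have hsum2 : ∑ χ : DirichletCharacter ℂ q,
        Complex.normSq (T g χ) * ((N:ℝ) + Sg - 2*(T g χ).re) ≤ (N:ℝ)^3 * ε^2 := by
      calc ∑ χ : DirichletCharacter ℂ q,
            Complex.normSq (T g χ) * ((N:ℝ) + Sg - 2*(T g χ).re)
          = ∑ χ : DirichletCharacter ℂ q, ∑ b : (ZMod q)ˣ,
              Complex.normSq (T g χ) * Complex.normSq (χ (b : ZMod q) - g b) := by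
            refine Finset.sum_congr rfl fun χ _ => ?_
            rw [← Finset.mul_sum, hW χ]
        _ = ∑ b : (ZMod q)ˣ, ∑ χ : DirichletCharacter ℂ q,
              Complex.normSq (T g χ) * Complex.normSq (χ (b : ZMod q) - g b) :=
            Finset.sum_comm
        _ ≤ ∑ _b : (ZMod q)ˣ, (N:ℝ)^2 * ε^2 := Finset.sum_le_sum fun b _ => hmaster b
        _ = (N:ℝ)^3 * ε^2 := by
            rw [Finset.sum_const, Finset.card_univ, nsmul_eq_mul]
            ring
    have hstrict : ((N:ℝ) * Sg) * c₀ < (N:ℝ)^3 * ε^2 := by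
      have heq : ∑ χ : DirichletCharacter ℂ q, Complex.normSq (T g χ) * c₀
          = ((N:ℝ) * Sg) * c₀ := by
        rw [← Finset.sum_mul, hPg]
      rw [← heq]
      exact lt_of_lt_of_le hsum1 hsum2
    -- numeric contradiction
    have h2' : (0:ℝ) ≤ ε^3 - 4*ε + 2 := by nlinarith [pow_nonneg hε0 3]
    have hpoly : ε^2 ≤ (1-ε)^2*(ε^2+2*ε) := by nlinarith [mul_nonneg hε0 h2']
    have hc0nn : (0:ℝ) ≤ c₀ := le_trans (by positivity) hc₀pos
    have hstep1 : (N:ℝ) * ((N:ℝ)*(1-ε)^2) * c₀ ≤ (N:ℝ) * Sg * c₀ :=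
      mul_le_mul_of_nonneg_right (mul_le_mul_of_nonneg_left hSg hNR.le) hc0nn
    have hstep2 : (N:ℝ) * ((N:ℝ)*(1-ε)^2) * ((N:ℝ)*(ε^2+2*ε))
        ≤ (N:ℝ) * ((N:ℝ)*(1-ε)^2) * c₀ :=
      mul_le_mul_of_nonneg_left hc₀pos (by positivity)
    nlinarith [hstep1, hstep2, hstrict, hpoly, pow_pos hNR 3,
      mul_le_mul_of_nonneg_left hpoly (le_of_lt (pow_pos hNR 3))]
  -- conclusion
  obtain ⟨χ, hχ⟩ := hex
  refine ⟨χ, fun a => ?_⟩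
  have hfact : (χ (a : ZMod q) - g a) * T g χ
      = ∑ b : (ZMod q)ˣ, (g (a * b) - g a * g b) * conj (χ (b : ZMod q)) := by
    have h1 : ∑ b : (ZMod q)ˣ, g (a * b) * conj (χ (b : ZMod q))
        = χ (a : ZMod q) * T g χ := T_shift g χ a
    have h2 : ∑ b : (ZMod q)ˣ, (g a * g b) * conj (χ (b : ZMod q)) = g a * T g χ := by
      simp_rw [mul_assoc]
      rw [← Finset.mul_sum]
      rfl
    calc (χ (a : ZMod q) - g a) * T g χ
        = χ (a : ZMod q) * T g χ - g a * T g χ := by ring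
      _ = (∑ b : (ZMod q)ˣ, g (a * b) * conj (χ (b : ZMod q)))
          - ∑ b : (ZMod q)ˣ, (g a * g b) * conj (χ (b : ZMod q)) := by rw [h1, h2]
      _ = ∑ b : (ZMod q)ˣ, (g (a * b) - g a * g b) * conj (χ (b : ZMod q)) := by
          rw [← Finset.sum_sub_distrib]
          refine Finset.sum_congr rfl fun b _ => ?_
          ring
  have habs : ‖χ (a : ZMod q) - g a‖ * ‖T g χ‖ ≤ (N:ℝ) * ε := by
    rw [← norm_mul, hfact]
    calc ‖∑ b : (ZMod q)ˣ, (g (a * b) - g a * g b) * conj (χ (b : ZMod q))‖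
        ≤ ∑ b : (ZMod q)ˣ, ‖(g (a * b) - g a * g b) * conj (χ (b : ZMod q))‖ :=
          norm_sum_le _ _
      _ ≤ ∑ _b : (ZMod q)ˣ, ε := by
          refine Finset.sum_le_sum fun b _ => ?_
          rw [norm_mul, Complex.norm_conj, abs_char χ b, mul_one]
          exact hgmul a b
      _ = (N:ℝ) * ε := by rw [Finset.sum_const, Finset.card_univ, nsmul_eq_mul]
  have h12 : (0:ℝ) < 1 - 2*ε := by linarith
  have hTpos : (0:ℝ) < ‖T g χ‖ :=
    lt_of_lt_of_le (mul_pos h12 hNR) hχ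
  rw [le_div_iff₀ h12]
  have hx0 : (0:ℝ) ≤ ‖χ (a : ZMod q) - g a‖ := norm_nonneg _
  nlinarith [habs, hχ, mul_le_mul_of_nonneg_left hχ hx0, hNR]
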